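/- Let q : ℓ₁ → c₀ be any bounded linear surjection. Then the exact sequence 0 → ker q → ℓ₁ → c₀ → 0 is not locally trivial: there is no constant λ such that for every finite-dimensional subspace F of c₀ there exists a linear map T : F → ℓ₁ with q(T(x)) = x for all x ∈ F and ‖T‖ ≤ λ. -/

import Mathlib

open scoped ZeroAtInfty

/-- The sequence space `ℓ₁`. -/
noncomputable abbrev ellOne := lp (fun _ : ℕ => ℝ) 1


noncomputable def rad (b : Bool) : ℝ := if b then 1 else -1

lemma rad_true : rad true = 1 := rfl
lemma rad_false : rad false = -1 := rfl

lemma card_bool_fun (n : ℕ) : (Finset.univ : Finset (Fin n → Bool)).card = 2 ^ n := by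
  simp [Finset.card_univ]

lemma sum_cons_bool {n : ℕ} (f : (Fin (n+1) → Bool) → ℝ) :
    ∑ ε : Fin (n+1) → Bool, f ε
      = ∑ ε : Fin n → Bool, (f (Fin.cons true ε) + f (Fin.cons false ε)) := by
  rw [← Fintype.sum_equiv (Fin.consEquiv fun _ => Bool)
      (fun p => f (Fin.cons p.1 p.2)) f (fun p => rfl)]
  rw [Fintype.sum_prod_type_right]
  simp [Fintype.sum_bool]

lemma key_cons {n : ℕ} (a : Fin (n+1) → ℝ) (ε : Fin n → Bool) (b : Bool) :
    (∑ i, rad ((Fin.cons b ε : Fin (n+1) → Bool) i) * a i)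
      = rad b * a 0 + ∑ i : Fin n, rad (ε i) * a i.succ := by
  rw [Fin.sum_univ_succ]
  simp

lemma moment2 : ∀ (n : ℕ) (a : Fin n → ℝ),
    ∑ ε : Fin n → Bool, (∑ i, rad (ε i) * a i) ^ 2 = 2 ^ n * ∑ i, (a i) ^ 2 := by
  intro n
  induction n with
  | zero => intro a; simp
  | succ n ih =>
    intro a
    rw [sum_cons_bool]
    have h := ih (fun i => a i.succ)
    rw [Fin.sum_univ_succ (fun i => (a i)^2)]
    calc ∑ ε : Fin n → Bool,
          ((∑ i, rad ((Fin.cons true ε : Fin (n+1) → Bool) i) * a i) ^ 2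
            + (∑ i, rad ((Fin.cons false ε : Fin (n+1) → Bool) i) * a i) ^ 2)
        = ∑ ε : Fin n → Bool,
            (2 * (a 0) ^ 2 + 2 * (∑ i : Fin n, rad (ε i) * a i.succ) ^ 2) := by
          refine Finset.sum_congr rfl fun ε _ => ?_
          rw [key_cons a ε true, key_cons a ε false, rad_true, rad_false]
          ring
      _ = 2 ^ (n+1) * ((a 0) ^ 2 + ∑ i : Fin n, (a i.succ) ^ 2) := by
          rw [Finset.sum_add_distrib, Finset.sum_const, ← Finset.mul_sum, h,
            card_bool_fun, nsmul_eq_mul]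
          push_cast
          ring

lemma moment4 : ∀ (n : ℕ) (a : Fin n → ℝ),
    ∑ ε : Fin n → Bool, (∑ i, rad (ε i) * a i) ^ 4
      ≤ 3 * 2 ^ n * (∑ i, (a i) ^ 2) ^ 2 := by
  intro n
  induction n with
  | zero => intro a; simp
  | succ n ih =>
    intro a
    rw [sum_cons_bool]
    have h2 := moment2 n (fun i => a i.succ)
    have h4 := ih (fun i => a i.succ)
    set s := ∑ i : Fin n, (a i.succ) ^ 2 with hs_def
    have hs : (0:ℝ) ≤ s := Finset.sum_nonneg fun i _ => sq_nonneg _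
    have hpow : (0:ℝ) < 2 ^ n := by positivity
    rw [Fin.sum_univ_succ (fun i => (a i)^2)]
    have step1 : ∑ ε : Fin n → Bool,
          ((∑ i, rad ((Fin.cons true ε : Fin (n+1) → Bool) i) * a i) ^ 4
            + (∑ i, rad ((Fin.cons false ε : Fin (n+1) → Bool) i) * a i) ^ 4)
        = 2 ^ n * (2 * (a 0) ^ 4) + 12 * (a 0)^2 * (2^n * s)
            + 2 * ∑ ε : Fin n → Bool, (∑ i : Fin n, rad (ε i) * a i.succ) ^ 4 := by
      have : ∀ ε : Fin n → Bool,
          (∑ i, rad ((Fin.cons true ε : Fin (n+1) → Bool) i) * a i) ^ 4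
            + (∑ i, rad ((Fin.cons false ε : Fin (n+1) → Bool) i) * a i) ^ 4
          = 2 * (a 0) ^ 4 + 12 * (a 0)^2 * (∑ i : Fin n, rad (ε i) * a i.succ) ^ 2
              + 2 * (∑ i : Fin n, rad (ε i) * a i.succ) ^ 4 := by
        intro ε
        rw [key_cons a ε true, key_cons a ε false, rad_true, rad_false]
        ring
      rw [Finset.sum_congr rfl fun ε _ => this ε]
      rw [Finset.sum_add_distrib, Finset.sum_add_distrib, Finset.sum_const,
        ← Finset.mul_sum, ← Finset.mul_sum, h2, card_bool_fun, nsmul_eq_mul]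
      push_cast
      ring
    rw [step1]
    have step2 : 2 * (a 0)^4 + 12 * (a 0)^2 * s + 6 * s^2 ≤ 6 * ((a 0)^2 + s)^2 := by
      nlinarith [pow_le_pow_left₀ (sq_nonneg (a 0)) (le_refl ((a 0)^2)) 2, sq_nonneg ((a 0)^2)]
    have step3 := mul_le_mul_of_nonneg_left step2 hpow.le
    have hpowsucc : (2:ℝ) ^ (n+1) = 2 * 2 ^ n := by ring
    nlinarith [h4, step3]

/-- pointwise inequality: for `t > 0`, `x^2/t - x^4/(4t^3) ≤ |x|`. -/
lemma pointwise_ineq {x t : ℝ} (ht : 0 < t) :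
    x^2 / t - x^4 / (4 * t^3) ≤ |x| := by
  have hy : (0:ℝ) ≤ |x| := abs_nonneg x
  have hx2 : x^2 = |x|^2 := (sq_abs x).symm
  have hx4 : x^4 = |x|^4 := by
    rw [show (4:ℕ) = 2*2 from rfl, pow_mul, pow_mul, sq_abs]
  rw [hx2, hx4]
  set y := |x|
  rw [div_sub_div _ _ (ne_of_gt ht) (by positivity), div_le_iff₀ (by positivity)]
  nlinarith [mul_nonneg (mul_nonneg ht.le (sq_nonneg y)) (sq_nonneg (y - 2*t)),
    mul_nonneg (mul_nonneg (mul_nonneg ht.le ht.le) hy) (sq_nonneg (y - t))]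

/-- Khintchine-type lower bound. -/
lemma khintchine (n : ℕ) (a : Fin n → ℝ) :
    (4/9) * 2 ^ n * Real.sqrt (∑ i, (a i)^2)
      ≤ ∑ ε : Fin n → Bool, |∑ i, rad (ε i) * a i| := by
  set σ2 := ∑ i, (a i)^2 with hσ2
  have hσ2nn : 0 ≤ σ2 := Finset.sum_nonneg fun i _ => sq_nonneg _
  rcases eq_or_lt_of_le hσ2nn with h0 | hpos
  · rw [← h0, Real.sqrt_zero]
    simp only [mul_zero]
    exact Finset.sum_nonneg fun ε _ => abs_nonneg _
  · set σ := Real.sqrt σ2 with hσ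
    have hσpos : 0 < σ := Real.sqrt_pos.2 hpos
    have hσsq : σ^2 = σ2 := Real.sq_sqrt hσ2nn
    set t := 3 * σ / 2 with ht_def
    have ht : 0 < t := by positivity
    have hle : ∀ ε : Fin n → Bool,
        (∑ i, rad (ε i) * a i)^2 / t - (∑ i, rad (ε i) * a i)^4 / (4 * t^3)
          ≤ |∑ i, rad (ε i) * a i| := fun ε => pointwise_ineq ht
    have hsum := Finset.sum_le_sum (fun ε (_ : ε ∈ Finset.univ) => hle ε)
    have hm2 := moment2 n a
    have hm4 := moment4 n a
    rw [Finset.sum_sub_distrib] at hsum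
    have e1 : ∑ ε : Fin n → Bool, (∑ i, rad (ε i) * a i)^2 / t = 2^n * σ2 / t := by
      rw [← Finset.sum_div, hm2]
    have e2 : ∑ ε : Fin n → Bool, (∑ i, rad (ε i) * a i)^4 / (4*t^3)
        ≤ 3 * 2^n * σ2^2 / (4*t^3) := by
      rw [← Finset.sum_div]
      exact div_le_div_of_nonneg_right hm4 (by positivity) |>.trans_eq rfl
    have lower : (4/9) * 2^n * σ ≤ 2^n * σ2 / t - 3 * 2^n * σ2^2 / (4*t^3) := by
      rw [ht_def, ← hσsq]
      have hσne : σ ≠ 0 := ne_of_gt hσpos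
      have : 2^n * σ^2 / (3*σ/2) - 3 * 2^n * (σ^2)^2 / (4*(3*σ/2)^3)
          = (4/9) * 2^n * σ := by
        field_simp
        ring
      rw [this]
    calc (4/9) * 2^n * σ ≤ 2^n * σ2 / t - 3 * 2^n * σ2^2 / (4*t^3) := lower
      _ ≤ ∑ ε : Fin n → Bool, (∑ i, rad (ε i) * a i)^2 / t
            - ∑ ε : Fin n → Bool, (∑ i, rad (ε i) * a i)^4 / (4*t^3) := by
          rw [e1]; linarith [e2]
      _ ≤ ∑ ε : Fin n → Bool, |∑ i, rad (ε i) * a i| := hsum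


open scoped ZeroAtInfty


/-- the indicator of `{i}` as an element of `C₀(ℕ, ℝ)`. -/
noncomputable def eC0 (i : ℕ) : C₀(ℕ, ℝ) :=
  ⟨⟨fun m => if m = i then 1 else 0, continuous_of_discreteTopology⟩, by
    rw [Filter.cocompact_eq_cofinite]
    refine Filter.Tendsto.congr' ?_ (tendsto_const_nhds (x := (0:ℝ)))
    have h := Set.Finite.eventually_cofinite_notMem (Set.finite_singleton i)
    filter_upwards [h] with m hm
    simp only [Set.mem_singleton_iff] at hm
    simp [hm]⟩

lemma eC0_apply (i m : ℕ) : eC0 i m = if m = i then 1 else 0 := rfl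

/-- evaluation as an `AddMonoidHom`. -/
noncomputable def evalC0 (m : ℕ) : C₀(ℕ, ℝ) →+ ℝ where
  toFun f := f m
  map_zero' := rfl
  map_add' f g := rfl

lemma c0_apply_le_norm (f : C₀(ℕ, ℝ)) (m : ℕ) : |f m| ≤ ‖f‖ := by
  rw [← ZeroAtInftyContinuousMap.norm_toBCF_eq_norm]
  simpa [Real.norm_eq_abs] using f.toBCF.norm_coe_le_norm m

lemma c0_norm_le (f : C₀(ℕ, ℝ)) (C : ℝ) (h0 : 0 ≤ C) (h : ∀ m, |f m| ≤ C) : ‖f‖ ≤ C := by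
  rw [← ZeroAtInftyContinuousMap.norm_toBCF_eq_norm]
  exact (BoundedContinuousFunction.norm_le h0).2 (by simpa [Real.norm_eq_abs] using h)

lemma norm_eC0 (i : ℕ) : ‖eC0 i‖ = 1 := by
  refine le_antisymm (c0_norm_le _ _ zero_le_one fun m => ?_) ?_
  · rw [eC0_apply]; split <;> simp
  · simpa [eC0_apply] using c0_apply_le_norm (eC0 i) i

lemma abs_rad (b : Bool) : |rad b| = 1 := by cases b <;> simp [rad]

set_option maxHeartbeats 1000000 in
theorem quotient_ell1_onto_c0_not_locally_trivial
    (q : ellOne →L[ℝ] C₀(ℕ, ℝ)) (hq : Function.Surjective q) :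
    ¬ ∃ lam : ℝ, ∀ F : Submodule ℝ C₀(ℕ, ℝ), FiniteDimensional ℝ F →
      ∃ T : F →ₗ[ℝ] ellOne,
        (∀ x : F, q (T x) = (x : C₀(ℕ, ℝ))) ∧
        ∀ x : F, ‖T x‖ ≤ lam * ‖(x : C₀(ℕ, ℝ))‖ := by
  rintro ⟨lam, hlam⟩
  -- q has positive norm
  have hqpos : 0 < ‖q‖ := by
    by_contra h
    push_neg at h
    have hq0 : ‖q‖ = 0 := le_antisymm h (norm_nonneg q)
    obtain ⟨x0, hx0⟩ := hq (eC0 0)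
    have : ‖eC0 0‖ = 0 := by
      rw [← hx0]
      have := q.le_opNorm x0
      rw [hq0, zero_mul] at this
      exact le_antisymm this (norm_nonneg _)
    rw [norm_eC0] at this; norm_num at this
  set C := ‖q‖ with hC
  -- choose n
  obtain ⟨n, hn⟩ := exists_nat_gt ((9/2 * C * lam)^2)
  have hn1 : 0 < n := by
    by_contra h
    push_neg at h
    interval_cases n
    · simp at hn; nlinarith [sq_nonneg (9/2*C*lam)]
  have hsqrtn : 9/2 * C * lam < Real.sqrt n := by
    rcases le_or_gt (9/2 * C * lam) 0 with h | h
    · exact h.trans_lt (Real.sqrt_pos.2 (by exact_mod_cast hn1))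
    · have := Real.sqrt_lt_sqrt (sq_nonneg _) hn
      rwa [Real.sqrt_sq h.le] at this
  -- the subspace and lifting
  set F := Submodule.span ℝ (Set.range fun i : Fin n => eC0 i) with hF
  haveI : FiniteDimensional ℝ F :=
    FiniteDimensional.span_of_finite ℝ (Set.finite_range _)
  obtain ⟨T, hTlift, hTnorm⟩ := hlam F inferInstance
  set eF : Fin n → F := fun i => ⟨eC0 i, Submodule.subset_span ⟨i, rfl⟩⟩ with heF
  set u : Fin n → ellOne := fun i => T (eF i) with hu_def
  have hu : ∀ i, q (u i) = eC0 i := fun i => hTlift (eF i)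
  have hunorm : ∀ i, 1 / C ≤ ‖u i‖ := by
    intro i
    have h1 : (1:ℝ) = ‖eC0 i‖ := (norm_eC0 i).symm
    have h2 : ‖eC0 i‖ ≤ C * ‖u i‖ := by rw [← hu i]; exact q.le_opNorm (u i)
    rw [div_le_iff₀ hqpos, mul_comm]
    rw [← h1] at h2
    linarith
  -- lam is nonnegative
  have hlam0 : 0 ≤ lam := by
    have h := hTnorm (eF ⟨0, hn1⟩)
    have : ((eF ⟨0, hn1⟩ : F) : C₀(ℕ, ℝ)) = eC0 0 := rfl
    rw [this, norm_eC0, mul_one] at h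
    exact le_trans (norm_nonneg _) h
  -- sign vectors in F
  set xv : (Fin n → Bool) → F := fun ε => ∑ i, rad (ε i) • eF i with hxv
  have hxcoe : ∀ ε, ((xv ε : F) : C₀(ℕ, ℝ)) = ∑ i, rad (ε i) • eC0 i := by
    intro ε
    rw [hxv]
    push_cast
    rfl
  have hxapply : ∀ ε m, ((xv ε : F) : C₀(ℕ, ℝ)) m
      = ∑ i : Fin n, rad (ε i) * (if m = (i:ℕ) then 1 else 0) := by
    intro ε m
    rw [hxcoe]
    change evalC0 m _ = _
    rw [map_sum]
    refine Finset.sum_congr rfl fun i _ => ?_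
    show ((rad (ε i) • eC0 (i:ℕ)) : C₀(ℕ,ℝ)) m = _
    rw [ZeroAtInftyContinuousMap.coe_smul]
    simp [eC0_apply]
  have hxnorm : ∀ ε, ‖((xv ε : F) : C₀(ℕ, ℝ))‖ ≤ 1 := by
    intro ε
    refine c0_norm_le _ _ zero_le_one fun m => ?_
    rw [hxapply]
    rcases lt_or_ge m n with hm | hm
    · rw [Finset.sum_eq_single (⟨m, hm⟩ : Fin n)]
      · simp [abs_rad]
      · intro j _ hj
        have : m ≠ (j : ℕ) := fun h => hj (by ext; simp [← h])
        simp [this]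
      · intro h; exact absurd (Finset.mem_univ _) h
    · rw [Finset.sum_eq_zero]
      · simp
      · intro j _
        have hj := j.isLt
        have : m ≠ (j : ℕ) := by omega
        simp [this]
  -- coordinates of T (xv ε)
  have hTx : ∀ ε, T (xv ε) = ∑ i, rad (ε i) • u i := by
    intro ε
    rw [hxv, map_sum]
    exact Finset.sum_congr rfl fun i _ => by rw [map_smul]
  have hsum_norm : ∀ i, HasSum (fun k => |u i k|) ‖u i‖ := by
    intro i
    have h := lp.hasSum_norm (p := 1) (by norm_num) (u i)
    simpa [Real.norm_eq_abs] using h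
  have hCC : 1/(2*C) < 1/C := by
    rw [div_lt_div_iff₀ (by linarith) hqpos]
    linarith
  have hexists : ∀ i : Fin n, ∃ m : ℕ, 1/(2*C) < ∑ k ∈ Finset.range m, |u i k| := by
    intro i
    have hlt : 1/(2*C) < ‖u i‖ := lt_of_lt_of_le hCC (hunorm i)
    exact (((hsum_norm i).tendsto_sum_nat).eventually (eventually_gt_nhds hlt)).exists
  choose mm hmm using hexists
  set M := Finset.univ.sup mm with hM
  set K := Finset.range M with hK
  have hb : ∀ i, 1/(2*C) < ∑ k ∈ K, |u i k| := by
    intro i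
    refine lt_of_lt_of_le (hmm i) (Finset.sum_le_sum_of_subset_of_nonneg ?_ ?_)
    · exact Finset.range_subset_range.2 (Finset.le_sup (Finset.mem_univ i))
    · intros; positivity
  have hcoord : ∀ ε (k : ℕ), (T (xv ε) : ∀ _ : ℕ, ℝ) k = ∑ i, rad (ε i) * (u i k) := by
    intro ε k
    rw [hTx, lp.coeFn_sum, Finset.sum_apply]
    refine Finset.sum_congr rfl fun i _ => ?_
    rw [lp.coeFn_smul]
    simp
  set A := ∑ ε : Fin n → Bool, ‖T (xv ε)‖ with hA
  have hupper : A ≤ 2^n * lam := by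
    rw [hA]
    calc ∑ ε : Fin n → Bool, ‖T (xv ε)‖
        ≤ ∑ _ε : Fin n → Bool, lam := by
          refine Finset.sum_le_sum fun ε _ => ?_
          calc ‖T (xv ε)‖ ≤ lam * ‖((xv ε : F) : C₀(ℕ, ℝ))‖ := hTnorm (xv ε)
            _ ≤ lam * 1 := mul_le_mul_of_nonneg_left (hxnorm ε) hlam0
            _ = lam := mul_one lam
      _ = 2^n * lam := by
          rw [Finset.sum_const, nsmul_eq_mul, Finset.card_univ]
          simp
  -- lower bound
  have hstep1 : ∀ ε, ∑ k ∈ K, |(T (xv ε) : ∀ _ : ℕ, ℝ) k| ≤ ‖T (xv ε)‖ := by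
    intro ε
    have h := lp.sum_rpow_le_norm_rpow (p := 1) (by norm_num) (T (xv ε)) K
    simpa [Real.norm_eq_abs] using h
  have hstep2 : ∑ k ∈ K, ∑ ε : Fin n → Bool, |∑ i, rad (ε i) * (u i k)| ≤ A := by
    rw [hA, ← Finset.sum_comm]
    refine Finset.sum_le_sum fun ε _ => ?_
    calc ∑ k ∈ K, |∑ i, rad (ε i) * (u i k)|
        = ∑ k ∈ K, |(T (xv ε) : ∀ _ : ℕ, ℝ) k| := by
          refine Finset.sum_congr rfl fun k _ => ?_
          rw [hcoord]
      _ ≤ ‖T (xv ε)‖ := hstep1 ε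
  have hstep3 : (4/9) * 2^n * ∑ k ∈ K, Real.sqrt (∑ i, (u i k)^2)
      ≤ ∑ k ∈ K, ∑ ε : Fin n → Bool, |∑ i, rad (ε i) * (u i k)| := by
    rw [Finset.mul_sum]
    exact Finset.sum_le_sum fun k _ => khintchine n (fun i => u i k)
  -- Minkowski: the sum of sqrt's dominates the Euclidean norm of row sums
  set v : ℕ → EuclideanSpace ℝ (Fin n) := fun k => WithLp.toLp 2 (fun i => |u i k|) with hv
  have hvnorm : ∀ k, ‖v k‖ = Real.sqrt (∑ i, (u i k)^2) := by
    intro k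
    rw [EuclideanSpace.norm_eq]
    congr 1
    refine Finset.sum_congr rfl fun i _ => ?_
    rw [hv]
    simp [Real.norm_eq_abs, sq_abs]
  have hsum_v : ∀ i, (∑ k ∈ K, v k) i = ∑ k ∈ K, |u i k| := by
    intro i
    rw [WithLp.ofLp_sum, Finset.sum_apply]
  have hwnorm : Real.sqrt n * (1/(2*C)) ≤ ‖∑ k ∈ K, v k‖ := by
    rw [EuclideanSpace.norm_eq]
    have hle : (n : ℝ) * (1/(2*C))^2 ≤ ∑ i : Fin n, ‖(∑ k ∈ K, v k) i‖^2 := by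
      calc (n : ℝ) * (1/(2*C))^2 = ∑ _i : Fin n, (1/(2*C))^2 := by
            rw [Finset.sum_const, nsmul_eq_mul, Finset.card_univ, Fintype.card_fin]
        _ ≤ ∑ i : Fin n, ‖(∑ k ∈ K, v k) i‖^2 := by
            refine Finset.sum_le_sum fun i _ => ?_
            rw [hsum_v, Real.norm_eq_abs,
              abs_of_nonneg (Finset.sum_nonneg fun k _ => abs_nonneg _)]
            have h0 : (0:ℝ) ≤ 1/(2*C) := by positivity
            exact pow_le_pow_left₀ h0 (hb i).le 2
    calc Real.sqrt n * (1/(2*C))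
        = Real.sqrt ((n : ℝ) * (1/(2*C))^2) := by
          rw [Real.sqrt_mul (Nat.cast_nonneg n), Real.sqrt_sq (by positivity)]
      _ ≤ _ := Real.sqrt_le_sqrt hle
  have hminkow : ‖∑ k ∈ K, v k‖ ≤ ∑ k ∈ K, Real.sqrt (∑ i, (u i k)^2) := by
    calc ‖∑ k ∈ K, v k‖ ≤ ∑ k ∈ K, ‖v k‖ := norm_sum_le K v
      _ = ∑ k ∈ K, Real.sqrt (∑ i, (u i k)^2) :=
          Finset.sum_congr rfl fun k _ => hvnorm k
  -- put everything together
  have hfinal : (4/9) * 2^n * (Real.sqrt n * (1/(2*C))) ≤ 2^n * lam := by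
    calc (4/9) * 2^n * (Real.sqrt n * (1/(2*C)))
        ≤ (4/9) * 2^n * ∑ k ∈ K, Real.sqrt (∑ i, (u i k)^2) := by
          refine mul_le_mul_of_nonneg_left (hwnorm.trans hminkow) (by positivity)
      _ ≤ A := hstep3.trans hstep2
      _ ≤ 2^n * lam := hupper
  have hpow : (0:ℝ) < 2^n := by positivity
  have h2 : (4/9) * (Real.sqrt n * (1/(2*C))) ≤ lam := by
    have h := hfinal
    rw [show (4/9:ℝ) * 2^n * (Real.sqrt (n:ℝ) * (1/(2*C)))
        = 2^n * ((4/9) * (Real.sqrt (n:ℝ) * (1/(2*C)))) from by ring] at h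
    exact (mul_le_mul_iff_right₀ hpow).1 h
  have h3 := mul_le_mul_of_nonneg_left h2 (show (0:ℝ) ≤ 9/2*C by positivity)
  have h4 : 9/2*C*((4/9) * (Real.sqrt (n:ℝ) * (1/(2*C)))) = Real.sqrt (n:ℝ) := by
    field_simp
    ring
  rw [h4] at h3
  linarith
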